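/- Let G, H, K be finite groups. For a left-free (G,H)-biset X define ρ(X) := Σ_{(U,α,V) ∈ E_{G,H}} (|X^{⊲(U,α,V)}| / |C_G(U)|) · (U,α,V) ∈ ℚA(G,H) (each integer |X^{⊲(U,α,V)}| is divisible by |C_G(U)|, and ρ(X) is fixed by the G×H-action). Then for every left-free (G,H)-biset X and every left-free (H,K)-biset Y one has ρ(X ×_H Y) = ρ(X) ·_H ρ(Y). -/

import Mathlib

open scoped Classical

/-- The set `E_{G,H}` of triples `(U,α,V)` with `V ≤ H`, `U ≤ G` and
`α : V → U` a surjective homomorphism, encoded as pairs of a subgroup `V ≤ H`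
and a homomorphism `α : ↥V →* G` (so that `U = α.range`). -/
abbrev TriE (G H : Type*) [Group G] [Group H] := (V : Subgroup H) × (↥V →* G)

/-- The graph subgroup `⊲(U,α,V) = {(α v, v) : v ∈ V} ≤ G × H` of a triple.
Triples are `G × H`-conjugate iff their graphs are conjugate. -/
def lhdOf {G H : Type*} [Group G] [Group H] (t : TriE G H) : Subgroup (G × H) :=
  (t.2.prod t.1.subtype).range

/-- The ghost-algebra product `ℚA(G,H) × ℚA(H,K) → ℚA(G,K)`, given on basis
elements by `(U,α,V)·(V',β,W) = 0` if `V ≠ V'` and by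
`(|C_H(V)|/|H|)·(U,α∘β,W)` if `V = V'`; elements of `ℚA` are represented by
their coefficient functions on the basis `TriE`. -/
noncomputable def ghostMul {G H K : Type*} [Group G] [Group H] [Group K]
    (a : TriE G H → ℚ) (b : TriE H K → ℚ) : TriE G K → ℚ :=
  fun r => ∑ᶠ (s : TriE G H), ∑ᶠ (t : TriE H K),
    if h : t.2.range = s.1 then
      (if r = ⟨t.1, s.2.comp (t.2.codRestrict s.1
            (fun w => h ▸ MonoidHom.mem_range.mpr ⟨w, rfl⟩))⟩ then
        ((Nat.card ↥(Subgroup.centralizer ((s.1 : Subgroup H) : Set H)) : ℚ) /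
          (Nat.card H : ℚ)) * a s * b t
      else 0)
    else 0

/-- The orbit sum `[U,α,V]⁺` (sum of the `G × H`-conjugates of the basis
element `(U,α,V)`), as a coefficient function: the indicator function of the
conjugation orbit of the triple `t`, detected via graphs. -/
noncomputable def orbSum {G H : Type*} [Group G] [Group H] (t : TriE G H) :
    TriE G H → ℚ :=
  fun s => if ∃ a : G × H,
    Subgroup.map (MulAut.conj a).toMonoidHom (lhdOf t) = lhdOf s then 1 else 0

/-- The `H`-orbit relation on `X × Y` whose quotient is the tensor product
`X ×_H Y` of a `(G,H)`-biset `X` and an `(H,K)`-biset `Y`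
(`h • (x,y) = (x h⁻¹, h y)`, i.e. `((1,h) • x, (h,1) • y)`). -/
def tensSetoid (G H K X Y : Type*) [Group G] [Group H] [Group K]
    [MulAction (G × H) X] [MulAction (H × K) Y] : Setoid (X × Y) where
  r a b := ∃ h : H, ((((1 : G), h) : G × H) • a.1, ((h, (1 : K)) : H × K) • a.2) = b
  iseqv := by
    constructor
    · intro a; exact ⟨1, by simp [Prod.mk_one_one]⟩
    · rintro a b ⟨h, rfl⟩
      exact ⟨h⁻¹, by simp [smul_smul, Prod.mk_one_one]⟩
    · rintro a b c ⟨h, rfl⟩ ⟨h', rfl⟩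
      exact ⟨h' * h, by simp [smul_smul]⟩

/-- The mark homomorphism `ρ_{G,H}` of a left-free `(G,H)`-biset `X`, as a
coefficient function on `TriE G H`:
`ρ(X)(U,α,V) = |X^{⊲(U,α,V)}| / |C_G(U)|`. -/
noncomputable def rhoFun (G H : Type*) [Group G] [Group H]
    (X : Type*) [MulAction (G × H) X] : TriE G H → ℚ :=
  fun t => (Nat.card {x : X | ∀ v : ↥t.1, ((t.2 v, (v : H)) : G × H) • x = x} : ℚ) /
    (Nat.card ↥(Subgroup.centralizer ((t.2.range : Subgroup G) : Set G)) : ℚ)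

/-- The mark homomorphism of the tensor product biset `X ×_H Y`, realized as
the quotient of `X × Y` by `tensSetoid`, with `(g,k)` acting on classes by
`[x,y] ↦ [(g,1) • x, (1,k) • y]`. -/
noncomputable def rhoProd (G H K : Type*) [Group G] [Group H] [Group K]
    (X Y : Type*) [MulAction (G × H) X] [MulAction (H × K) Y] : TriE G K → ℚ :=
  fun t => (Nat.card {q : Quotient (tensSetoid G H K X Y) |
      ∀ (w : ↥t.1) (x : X) (y : Y), Quotient.mk (tensSetoid G H K X Y) (x, y) = q →
        Quotient.mk (tensSetoid G H K X Y)
          (((t.2 w, (1 : H)) : G × H) • x, (((1 : H), (w : K)) : H × K) • y) = q} : ℚ) /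
    (Nat.card ↥(Subgroup.centralizer ((t.2.range : Subgroup G) : Set G)) : ℚ)

private lemma finite_monoidHom {A B : Type*} [Group A] [Group B] [Finite A] [Finite B] :
    Finite (A →* B) :=
  Finite.of_injective _ DFunLike.coe_injective

private lemma smul_pair_comp {A B Z : Type*} [Group A] [Group B] [MulAction (A × B) Z]
    (a a' : A) (b b' : B) (z : Z) :
    ((a, b) : A × B) • (((a', b') : A × B) • z) = ((a * a', b * b') : A × B) • z := by
  rw [smul_smul, Prod.mk_mul_mk]

private lemma smul_pair_one {A B Z : Type*} [Group A] [Group B] [MulAction (A × B) Z] (z : Z) :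
    (((1 : A), (1 : B)) : A × B) • z = z := by
  have h : ((1 : A), (1 : B)) = (1 : A × B) := rfl
  rw [h, one_smul]

private lemma sum_sigma_fintype {ι : Type*} {σ : ι → Type*} [Fintype ι] [∀ i, Fintype (σ i)]
    {M : Type*} [AddCommMonoid M] (f : (Σ i, σ i) → M) :
    ∑ x : Σ i, σ i, f x = ∑ i : ι, ∑ y : σ i, f ⟨i, y⟩ := by
  rw [← Finset.univ_sigma_univ, Finset.sum_sigma]

/-- Counting lemma for free actions: if a finite group `C` acts freely on a
finite set `S` then `|C|` divides `|S|`. -/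
theorem freeCard {C S : Type*} [Group C] [Finite C] [Finite S]
    (act : C → S → S) (h1 : ∀ s, act 1 s = s)
    (hm : ∀ c c' s, act (c * c') s = act c (act c' s))
    (hf : ∀ c s, act c s = s → c = 1) :
    ∃ n, Nat.card S = Nat.card C * n := by
  have hcan : ∀ c s, act c⁻¹ (act c s) = s := fun c s => by
    rw [← hm, inv_mul_cancel, h1]
  let st : Setoid S :=
    { r := fun a b => ∃ c, act c a = b
      iseqv := by
        refine ⟨fun a => ⟨1, h1 a⟩, ?_, ?_⟩
        · rintro a b ⟨c, rfl⟩; exact ⟨c⁻¹, hcan c a⟩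
        · rintro a b c ⟨d, rfl⟩ ⟨e, rfl⟩; exact ⟨e * d, hm e d a⟩ }
  have key : ∀ (c : C) (s : S), Quotient.mk st (act c s) = Quotient.mk st s :=
    fun c s => (Quotient.sound (show ∃ c', act c' s = act c s from ⟨c, rfl⟩)).symm
  have e : (C × Quotient st) ≃ S := by
    refine Equiv.ofBijective (fun p => act p.1 p.2.out) ⟨?_, ?_⟩
    · rintro ⟨c, q⟩ ⟨c', q'⟩ h
      simp only at h
      have hq : q = q' := by
        have h1' := key c q.out
        have h2' := key c' q'.out
        rw [Quotient.out_eq] at h1' h2'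
        rw [← h1', ← h2', h]
      subst hq
      have h2 : act (c'⁻¹ * c) q.out = q.out := by rw [hm, h, hcan]
      have hc : c' = c := inv_mul_eq_one.mp (hf _ _ h2)
      rw [hc]
    · intro s
      obtain ⟨c, hc⟩ : ∃ c, act c (Quotient.mk st s).out = s :=
        Quotient.exact (Quotient.out_eq (Quotient.mk st s))
      exact ⟨(c, Quotient.mk st s), hc⟩
  refine ⟨Nat.card (Quotient st), ?_⟩
  rw [← Nat.card_congr e, Nat.card_prod]

/-- for left-free bisets `X` (a `(G,H)`-biset) and `Y` (an
`(H,K)`-biset): each fixed point number `|X^{⊲(U,α,V)}|` is divisible by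
`|C_G(U)|`; the function `ρ(X)` is fixed by the `G × H`-action (constant on
conjugation orbits of triples, detected via graphs); and
`ρ(X ×_H Y) = ρ(X) ·_H ρ(Y)`. -/
theorem stmt11 {G H K : Type*} [Group G] [Group H] [Group K]
    [Finite G] [Finite H] [Finite K]
    (X Y : Type*) [Finite X] [Finite Y] [MulAction (G × H) X] [MulAction (H × K) Y]
    (hX : ∀ (x : X) (g : G), ((g, (1 : H)) : G × H) • x = x → g = 1)
    (hY : ∀ (y : Y) (h : H), ((h, (1 : K)) : H × K) • y = y → h = 1) :
    (∀ t : TriE G H,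
      Nat.card ↥(Subgroup.centralizer ((t.2.range : Subgroup G) : Set G)) ∣
        Nat.card {x : X | ∀ v : ↥t.1, ((t.2 v, (v : H)) : G × H) • x = x}) ∧
    (∀ (a : G × H) (t t' : TriE G H),
      Subgroup.map (MulAut.conj a).toMonoidHom (lhdOf t) = lhdOf t' →
        rhoFun G H X t = rhoFun G H X t') ∧
    rhoProd G H K X Y = ghostMul (rhoFun G H X) (rhoFun H K Y) := by
  have memlhd : ∀ (t : TriE G H) (p : G × H),
      p ∈ lhdOf t ↔ ∃ v : t.1, ((t.2 v, (v : H)) : G × H) = p := by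
    intro t p
    exact ⟨fun ⟨v, h⟩ => ⟨v, h⟩, fun ⟨v, h⟩ => ⟨v, h⟩⟩
  refine ⟨?_, ?_, ?_⟩
  · -- divisibility
    intro t
    have hclose : ∀ (c : ↥(Subgroup.centralizer ((t.2.range : Subgroup G) : Set G))) (x : X),
        (∀ v : ↥t.1, ((t.2 v, (v : H)) : G × H) • x = x) →
        ∀ v : ↥t.1, ((t.2 v, (v : H)) : G × H) • ((((c : G), (1 : H)) : G × H) • x)
          = (((c : G), (1 : H)) : G × H) • x := by
      intro c x hx v
      have hcomm : t.2 v * (c : G) = (c : G) * t.2 v :=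
        (Subgroup.mem_centralizer_iff.mp c.2) (t.2 v) ⟨v, rfl⟩
      calc ((t.2 v, (v : H)) : G × H) • ((((c : G), (1 : H)) : G × H) • x)
          = (((c : G), (1 : H)) : G × H) • (((t.2 v, (v : H)) : G × H) • x) := by
            rw [smul_smul, smul_smul, Prod.mk_mul_mk, Prod.mk_mul_mk, hcomm, mul_one, one_mul]
        _ = (((c : G), (1 : H)) : G × H) • x := by rw [hx v]
    obtain ⟨n, hn⟩ := freeCard
      (C := ↥(Subgroup.centralizer ((t.2.range : Subgroup G) : Set G)))
      (S := ↥{x : X | ∀ v : ↥t.1, ((t.2 v, (v : H)) : G × H) • x = x})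
      (fun c x => ⟨(((c : G), (1 : H)) : G × H) • x.1, hclose c x.1 x.2⟩)
      (fun x => Subtype.ext (one_smul (G × H) x.1))
      (fun c c' x => Subtype.ext (by
        simp only [Subgroup.coe_mul]
        rw [smul_smul, Prod.mk_mul_mk, one_mul]))
      (fun c x hcx => by
        have : ((c : G), (1 : H)) • x.1 = x.1 := congrArg Subtype.val hcx
        exact OneMemClass.coe_eq_one.mp (hX x.1 c this))
    exact ⟨n, hn⟩
  · -- conjugation invariance
    intro a t t' hmap
    have fwd : ∀ p ∈ lhdOf t, a * p * a⁻¹ ∈ lhdOf t' := by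
      intro p hp
      rw [← hmap]
      exact Subgroup.mem_map.mpr ⟨p, hp, by simp [MulAut.conj_apply]⟩
    have bwd : ∀ p ∈ lhdOf t', a⁻¹ * p * a ∈ lhdOf t := by
      intro p hp
      rw [← hmap] at hp
      obtain ⟨q, hq, rfl⟩ := Subgroup.mem_map.mp hp
      have hqq : a⁻¹ * ((MulAut.conj a).toMonoidHom q) * a = q := by
        simp [MulAut.conj_apply]; group
      rwa [hqq]
    -- fixed point sets have the same cardinality
    have eS : Nat.card {x : X | ∀ v : ↥t.1, ((t.2 v, (v : H)) : G × H) • x = x}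
        = Nat.card {x : X | ∀ v : ↥t'.1, ((t'.2 v, (v : H)) : G × H) • x = x} := by
      have keyfix : ∀ (b : G × H) (u u' : TriE G H),
          (∀ p ∈ lhdOf u', b⁻¹ * p * b ∈ lhdOf u) →
          ∀ x : X, (∀ v : ↥u.1, ((u.2 v, (v : H)) : G × H) • x = x) →
          ∀ v' : ↥u'.1, ((u'.2 v', (v' : H)) : G × H) • (b • x) = b • x := by
        intro b u u' hb x hx v'
        obtain ⟨v, hv⟩ := (memlhd u _).mp
          (hb ((u'.2 v', (v' : H)) : G × H) ((memlhd u' _).mpr ⟨v', rfl⟩))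
        calc ((u'.2 v', (v' : H)) : G × H) • (b • x)
            = (b * (b⁻¹ * ((u'.2 v', (v' : H)) : G × H) * b)) • x := by
              rw [smul_smul]; congr 1; group
          _ = b • ((b⁻¹ * ((u'.2 v', (v' : H)) : G × H) * b) • x) := mul_smul _ _ _
          _ = b • x := by rw [← hv, hx v]
      have bwd' : ∀ p ∈ lhdOf t, a⁻¹⁻¹ * p * a⁻¹ ∈ lhdOf t' := by
        intro p hp
        have := fwd p hp
        rwa [inv_inv]
      exact Nat.card_congr
        ⟨fun x => ⟨a • x.1, keyfix a t t' bwd x.1 x.2⟩,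
         fun x => ⟨a⁻¹ • x.1, keyfix a⁻¹ t' t bwd' x.1 x.2⟩,
         fun x => Subtype.ext (inv_smul_smul a x.1),
         fun x => Subtype.ext (smul_inv_smul a x.1)⟩
    -- centralizers of the ranges have the same cardinality
    have r1 : ∀ u : G, u ∈ t.2.range → a.1 * u * a.1⁻¹ ∈ t'.2.range := by
      rintro u ⟨v, rfl⟩
      obtain ⟨v', hv'⟩ := (memlhd t' _).mp
        (fwd ((t.2 v, (v : H)) : G × H) ((memlhd t _).mpr ⟨v, rfl⟩))
      refine ⟨v', ?_⟩
      have := congrArg Prod.fst hv'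
      simpa using this
    have r2 : ∀ u : G, u ∈ t'.2.range → a.1⁻¹ * u * a.1 ∈ t.2.range := by
      rintro u ⟨v', rfl⟩
      obtain ⟨v, hv⟩ := (memlhd t _).mp
        (bwd ((t'.2 v', (v' : H)) : G × H) ((memlhd t' _).mpr ⟨v', rfl⟩))
      refine ⟨v, ?_⟩
      have := congrArg Prod.fst hv
      simpa using this
    have centmap : ∀ (g₀ : G) (u u' : TriE G H),
        (∀ u₀ : G, u₀ ∈ u'.2.range → g₀⁻¹ * u₀ * g₀ ∈ u.2.range) →
        ∀ c : G, c ∈ Subgroup.centralizer ((u.2.range : Subgroup G) : Set G) →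
          g₀ * c * g₀⁻¹ ∈ Subgroup.centralizer ((u'.2.range : Subgroup G) : Set G) := by
      intro g₀ u u' hr c hc
      rw [Subgroup.mem_centralizer_iff]
      intro u₀ hu₀
      have h := (Subgroup.mem_centralizer_iff.mp hc) (g₀⁻¹ * u₀ * g₀) (hr u₀ hu₀)
      calc u₀ * (g₀ * c * g₀⁻¹) = g₀ * ((g₀⁻¹ * u₀ * g₀) * c) * g₀⁻¹ := by group
        _ = g₀ * (c * (g₀⁻¹ * u₀ * g₀)) * g₀⁻¹ := by rw [h]
        _ = (g₀ * c * g₀⁻¹) * u₀ := by group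
    have r1' : ∀ u : G, u ∈ t.2.range → a.1⁻¹⁻¹ * u * a.1⁻¹ ∈ t'.2.range := by
      intro u hu; have := r1 u hu; rwa [inv_inv]
    have eC : Nat.card ↥(Subgroup.centralizer ((t.2.range : Subgroup G) : Set G))
        = Nat.card ↥(Subgroup.centralizer ((t'.2.range : Subgroup G) : Set G)) := by
      refine Nat.card_congr
        ⟨fun c => ⟨a.1 * c * a.1⁻¹, centmap a.1 t t' r2 c.1 c.2⟩,
         fun c => ⟨a.1⁻¹ * c * a.1⁻¹⁻¹, centmap a.1⁻¹ t' t r1' c.1 c.2⟩,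
         fun c => Subtype.ext (by simp only []; group),
         fun c => Subtype.ext (by simp only []; group)⟩
    simp only [rhoFun]
    rw [eS, eC]
  · -- multiplicativity
    letI : Fintype (Subgroup H) := Fintype.ofFinite _
    letI : Fintype (Subgroup K) := Fintype.ofFinite _
    letI : ∀ V : Subgroup H, Fintype (↥V →* G) := fun V => @Fintype.ofFinite _ finite_monoidHom
    letI : ∀ V : Subgroup K, Fintype (↥V →* H) := fun V => @Fintype.ofFinite _ finite_monoidHom
    funext r
    obtain ⟨W, γ⟩ := r
    set st := tensSetoid G H K X Y with hstdef
    have hmkact : ∀ (h : H) (p : X × Y), Quotient.mk st p =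
        Quotient.mk st ((((1 : G), h) : G × H) • p.1, ((h, (1 : K)) : H × K) • p.2) :=
      fun h p => Quotient.sound ⟨h, rfl⟩
    have hexact : ∀ p q : X × Y, Quotient.mk st p = Quotient.mk st q →
        ∃ h : H, ((((1 : G), h) : G × H) • p.1, ((h, (1 : K)) : H × K) • p.2) = q :=
      fun p q hpq => Quotient.exact hpq
    have cancelY : ∀ (y : Y) (k : K) (h h' : H),
        ((h, k) : H × K) • y = ((h', k) : H × K) • y → h = h' := by
      intro y k h h' hE
      have h3 := congrArg (fun z => ((h'⁻¹, k⁻¹) : H × K) • z) hE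
      simp only [smul_pair_comp] at h3
      rw [inv_mul_cancel, inv_mul_cancel] at h3
      rw [smul_pair_one] at h3
      exact (inv_mul_eq_one.mp (hY y _ h3)).symm
    have uniqH : ∀ (y : Y) (k : K) (h h' : H), ((h, k) : H × K) • y = y →
        ((h', k) : H × K) • y = y → h = h' :=
      fun y k h h' hh hh' => cancelY y k h h' (hh.trans hh'.symm)
    set FixQ : Set (Quotient st) := {q | ∀ (w : ↥W) (x : X) (y : Y),
        Quotient.mk st (x, y) = q →
        Quotient.mk st (((γ w, (1 : H)) : G × H) • x, (((1 : H), (w : K)) : H × K) • y) = q}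
      with hFixQdef
    have hLHS : rhoProd G H K X Y ⟨W, γ⟩ = (Nat.card ↥FixQ : ℚ) /
        (Nat.card ↥(Subgroup.centralizer ((γ.range : Subgroup G) : Set G)) : ℚ) := rfl
    set F : Set (X × Y) := {p | Quotient.mk st p ∈ FixQ} with hFdef
    set F' : Set (X × Y) := {p | ∀ w : ↥W, ∃ h : H,
        ((γ w, h) : G × H) • p.1 = p.1 ∧ ((h, (w : K)) : H × K) • p.2 = p.2} with hF'def
    -- Step B : F = F'
    have hFF' : ∀ p : X × Y, p ∈ F ↔ p ∈ F' := by
      intro p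
      constructor
      · intro hp w
        obtain ⟨h, hh⟩ := hexact _ _ (hp w p.1 p.2 rfl)
        refine ⟨h, ?_, ?_⟩
        · have h1 := congrArg Prod.fst hh
          simp only at h1
          simp only [smul_pair_comp, one_mul, mul_one] at h1
          exact h1
        · have h2 := congrArg Prod.snd hh
          simp only at h2
          simp only [smul_pair_comp, one_mul, mul_one] at h2
          exact h2
      · intro hp w x' y' hmk
        obtain ⟨h₀, hh₀⟩ := hexact _ _ hmk
        obtain ⟨h, hx1, hy1⟩ := hp w
        have hx0 : (((1 : G), h₀) : G × H) • x' = p.1 := congrArg Prod.fst hh₀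
        have hy0 : ((h₀, (1 : K)) : H × K) • y' = p.2 := congrArg Prod.snd hh₀
        have e1 : ((γ w, h₀) : G × H) • x' = ((γ w, (1 : H)) : G × H) • p.1 := by
          rw [← hx0]; simp only [smul_pair_comp, one_mul, mul_one]
        have e2 : ((h₀, (w : K)) : H × K) • y' = (((1 : H), (w : K)) : H × K) • p.2 := by
          rw [← hy0]; simp only [smul_pair_comp, one_mul, mul_one]
        calc Quotient.mk st (((γ w, (1 : H)) : G × H) • x', (((1 : H), (w : K)) : H × K) • y')
            = Quotient.mk st ((((1 : G), h₀) : G × H) • (((γ w, (1 : H)) : G × H) • x'),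
                ((h₀, (1 : K)) : H × K) • ((((1 : H), (w : K)) : H × K) • y')) := hmkact h₀ _
          _ = Quotient.mk st (((γ w, h₀) : G × H) • x', ((h₀, (w : K)) : H × K) • y') := by
              simp only [smul_pair_comp, one_mul, mul_one]
          _ = Quotient.mk st (((γ w, (1 : H)) : G × H) • p.1,
                (((1 : H), (w : K)) : H × K) • p.2) := by rw [e1, e2]
          _ = Quotient.mk st ((((1 : G), h) : G × H) • (((γ w, (1 : H)) : G × H) • p.1),
                ((h, (1 : K)) : H × K) • ((((1 : H), (w : K)) : H × K) • p.2)) := hmkact h _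
          _ = Quotient.mk st (((γ w, h) : G × H) • p.1, ((h, (w : K)) : H × K) • p.2) := by
              simp only [smul_pair_comp, one_mul, mul_one]
          _ = Quotient.mk st (p.1, p.2) := by rw [hx1, hy1]
          _ = Quotient.mk st p := rfl
    -- Step A : |F| = |FixQ| * |H|
    have hA : Nat.card ↥F = Nat.card ↥FixQ * Nat.card H := by
      have mem : ∀ (q : ↥FixQ) (h : H),
          ((((1 : G), h) : G × H) • q.1.out.1, ((h, (1 : K)) : H × K) • q.1.out.2) ∈ F := by
        intro q h
        show Quotient.mk st _ ∈ FixQ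
        have hq : Quotient.mk st ((((1 : G), h) : G × H) • q.1.out.1,
            ((h, (1 : K)) : H × K) • q.1.out.2) = q.1 := by
          have h8 := hmkact h q.1.out
          rw [← h8]
          exact Quotient.out_eq _
        rw [hq]; exact q.2
      have e : (↥FixQ × H) ≃ ↥F := by
        refine Equiv.ofBijective (fun z => ⟨_, mem z.1 z.2⟩) ⟨?_, ?_⟩
        · rintro ⟨q, h⟩ ⟨q', h'⟩ hzz
          have hpair := congrArg Subtype.val hzz
          simp only at hpair
          have h9 : Quotient.mk st ((((1 : G), h) : G × H) • q.1.out.1,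
              ((h, (1 : K)) : H × K) • q.1.out.2)
              = Quotient.mk st ((((1 : G), h') : G × H) • q'.1.out.1,
              ((h', (1 : K)) : H × K) • q'.1.out.2) := congrArg (Quotient.mk st) hpair
          rw [← hmkact h q.1.out, ← hmkact h' q'.1.out, Quotient.out_eq, Quotient.out_eq] at h9
          have hq : q = q' := Subtype.ext h9
          subst hq
          have hy2 := congrArg Prod.snd hpair
          simp only at hy2
          have hh' : h = h' := cancelY q.1.out.2 1 h h' hy2
          rw [hh']
        · rintro ⟨p, hp⟩
          obtain ⟨h, hh⟩ := hexact (Quotient.mk st p).out p (Quotient.out_eq _)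
          exact ⟨(⟨Quotient.mk st p, hp⟩, h), Subtype.ext hh⟩
      calc Nat.card ↥F = Nat.card (↥FixQ × H) := (Nat.card_congr e).symm
        _ = Nat.card ↥FixQ * Nat.card H := Nat.card_prod _ _
    have hFcard : Nat.card ↥F = Nat.card ↥F' := Nat.card_congr (Equiv.setCongr (Set.ext hFF'))
    -- Step C : decompose F' along β
    set Sx : (↥W →* H) → Set X := fun β => {x | ∀ w : ↥W, ((γ w, β w) : G × H) • x = x}
      with hSxdef
    set Sy : (↥W →* H) → Set Y := fun β => {y | ∀ w : ↥W, ((β w, (w : K)) : H × K) • y = y}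
      with hSydef
    have hmem' : ∀ p : ↥F', ∀ w : ↥W, ∃ h : H,
        ((γ w, h) : G × H) • p.1.1 = p.1.1 ∧ ((h, (w : K)) : H × K) • p.1.2 = p.1.2 :=
      fun p => p.2
    choose f hfx hfy using hmem'
    have hBof : ∀ p : ↥F', ∀ w w' : ↥W, f p (w * w') = f p w * f p w' := by
      intro p w w'
      refine uniqH p.1.2 ((w * w' : ↥W) : K) _ _ (hfy p (w * w')) ?_
      rw [Subgroup.coe_mul, ← smul_pair_comp, hfy p w', hfy p w]
    have hBof1 : ∀ p : ↥F', f p 1 = 1 := by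
      intro p
      refine uniqH p.1.2 ((1 : ↥W) : K) _ 1 (hfy p 1) ?_
      rw [OneMemClass.coe_one]
      exact smul_pair_one p.1.2
    let Bof : ↥F' → (↥W →* H) := fun p =>
      { toFun := f p, map_one' := hBof1 p, map_mul' := hBof p }
    have eFib : ∀ β : ↥W →* H, {p : ↥F' // Bof p = β} ≃ (↥(Sx β) × ↥(Sy β)) := by
      intro β
      refine ⟨fun z => (⟨z.1.1.1, fun w => ?_⟩, ⟨z.1.1.2, fun w => ?_⟩),
              fun z => ⟨⟨(z.1.1, z.2.1), fun w => ⟨β w, z.1.2 w, z.2.2 w⟩⟩, ?_⟩, ?_, ?_⟩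
      · obtain ⟨p, hp⟩ := z; subst hp; exact hfx p w
      · obtain ⟨p, hp⟩ := z; subst hp; exact hfy p w
      · refine MonoidHom.ext fun w => ?_
        exact uniqH z.2.1 (w : K) _ (β w) (hfy _ w) (z.2.2 w)
      · rintro ⟨p, hp⟩
        exact Subtype.ext (Subtype.ext rfl)
      · rintro ⟨xx, yy⟩
        exact Prod.ext (Subtype.ext rfl) (Subtype.ext rfl)
    have eTot : ↥F' ≃ Σ β : ↥W →* H, (↥(Sx β) × ↥(Sy β)) :=
      (Equiv.sigmaFiberEquiv Bof).symm.trans (Equiv.sigmaCongrRight eFib)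
    have hF'card : Nat.card ↥F' = ∑ β : ↥W →* H, Nat.card ↥(Sx β) * Nat.card ↥(Sy β) := by
      letI : ∀ β : ↥W →* H, Fintype ↥(Sx β) := fun β => Fintype.ofFinite _
      letI : ∀ β : ↥W →* H, Fintype ↥(Sy β) := fun β => Fintype.ofFinite _
      rw [Nat.card_congr eTot, Nat.card_eq_fintype_card, Fintype.card_sigma]
      refine Finset.sum_congr rfl fun β _ => ?_
      rw [Fintype.card_prod, ← Nat.card_eq_fintype_card, ← Nat.card_eq_fintype_card]
    -- surjectivity of the range-restriction
    have hsurjAll : ∀ β : ↥W →* H, Function.Surjective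
        (β.codRestrict β.range (fun w => MonoidHom.mem_range.mpr ⟨w, rfl⟩)) := by
      intro β v
      obtain ⟨w, hw⟩ := MonoidHom.mem_range.mp v.2
      exact ⟨w, Subtype.ext hw⟩
    -- Step D : evaluate the ghost product
    have hRHS : ghostMul (rhoFun G H X) (rhoFun H K Y) ⟨W, γ⟩
        = ∑ β : ↥W →* H, ((Nat.card ↥(Sx β) : ℚ) * (Nat.card ↥(Sy β) : ℚ)) /
            ((Nat.card H : ℚ) *
             (Nat.card ↥(Subgroup.centralizer ((γ.range : Subgroup G) : Set G)) : ℚ)) := by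
      simp only [ghostMul, finsum_eq_sum_of_fintype]
      rw [Finset.sum_comm, sum_sigma_fintype]
      refine (Finset.sum_eq_single W ?_ ?_).trans (Finset.sum_congr rfl fun β _ => ?_)
      · intro V _ hV
        refine Finset.sum_eq_zero fun β _ => Finset.sum_eq_zero fun s _ => ?_
        split_ifs with h1 h2
        · exact absurd (congrArg Sigma.fst h2).symm hV
        · rfl
        · rfl
      · intro hW; exact absurd (Finset.mem_univ W) hW
      · -- fixed β, sum over s
        rw [sum_sigma_fintype]
        refine (Finset.sum_eq_single β.range ?_ ?_).trans ?_
        · intro V' _ hV'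
          refine Finset.sum_eq_zero fun α _ => ?_
          exact dif_neg (fun hc => hV' hc.symm)
        · intro h; exact absurd (Finset.mem_univ _) h
        · have hred : ∀ α : ↥β.range →* G,
              (if h : (⟨W, β⟩ : TriE H K).2.range = (⟨β.range, α⟩ : TriE G H).1 then
                (if (⟨W, γ⟩ : TriE G K) = ⟨(⟨W, β⟩ : TriE H K).1,
                    (⟨β.range, α⟩ : TriE G H).2.comp ((⟨W, β⟩ : TriE H K).2.codRestrict
                      (⟨β.range, α⟩ : TriE G H).1
                      (fun w => h ▸ MonoidHom.mem_range.mpr ⟨w, rfl⟩))⟩ then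
                  ((Nat.card ↥(Subgroup.centralizer
                      (((⟨β.range, α⟩ : TriE G H).1 : Subgroup H) : Set H)) : ℚ) /
                    (Nat.card H : ℚ)) * rhoFun G H X ⟨β.range, α⟩ * rhoFun H K Y ⟨W, β⟩
                else 0)
              else 0)
              = (if γ = α.comp (β.codRestrict β.range
                    (fun w => MonoidHom.mem_range.mpr ⟨w, rfl⟩)) then
                  ((Nat.card ↥(Subgroup.centralizer ((β.range : Subgroup H) : Set H)) : ℚ) /
                    (Nat.card H : ℚ)) * rhoFun G H X ⟨β.range, α⟩ * rhoFun H K Y ⟨W, β⟩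
                else 0) := by
            intro α
            rw [dif_pos rfl]
            by_cases hc : γ = α.comp (β.codRestrict β.range
                (fun w => MonoidHom.mem_range.mpr ⟨w, rfl⟩))
            · rw [if_pos hc, if_pos]
              exact congrArg (fun δ : ↥W →* G => (⟨W, δ⟩ : TriE G K)) hc
            · rw [if_neg hc, if_neg]
              intro hEq
              exact hc (eq_of_heq (Sigma.ext_iff.mp hEq).2)
          rw [Finset.sum_congr rfl fun α _ => hred α]
          by_cases hex : ∃ α₀ : ↥β.range →* G, γ = α₀.comp (β.codRestrict β.range
              (fun w => MonoidHom.mem_range.mpr ⟨w, rfl⟩))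
          · obtain ⟨α₀, hα₀⟩ := hex
            refine (Finset.sum_eq_single α₀ ?_ ?_).trans ?_
            · intro α _ hα
              rw [if_neg]
              intro hc
              apply hα
              refine MonoidHom.ext fun v => ?_
              obtain ⟨w, hw⟩ := hsurjAll β v
              rw [← hw]
              exact (DFunLike.congr_fun hc w).symm.trans (DFunLike.congr_fun hα₀ w)
            · intro h; exact absurd (Finset.mem_univ _) h
            · rw [if_pos hα₀]
              have hset' : {x : X | ∀ v : ↥β.range, ((α₀ v, (v : H)) : G × H) • x = x}
                  = Sx β := by
                ext x
                constructor
                · intro hx w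
                  have e1 : α₀ ((β.codRestrict β.range
                      (fun w => MonoidHom.mem_range.mpr ⟨w, rfl⟩)) w) = γ w :=
                    (DFunLike.congr_fun hα₀ w).symm
                  rw [← e1]
                  exact hx _
                · intro hx v
                  obtain ⟨w, hw⟩ := hsurjAll β v
                  rw [← hw]
                  have e1 : α₀ ((β.codRestrict β.range
                      (fun w => MonoidHom.mem_range.mpr ⟨w, rfl⟩)) w) = γ w :=
                    (DFunLike.congr_fun hα₀ w).symm
                  rw [e1]
                  exact hx w
              have hrange' : α₀.range = γ.range := by
                ext u
                constructor
                · rintro ⟨v, rfl⟩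
                  obtain ⟨w, hw⟩ := hsurjAll β v
                  exact ⟨w, by rw [← hw]; exact DFunLike.congr_fun hα₀ w⟩
                · rintro ⟨w, rfl⟩
                  exact ⟨(β.codRestrict β.range (fun w => MonoidHom.mem_range.mpr ⟨w, rfl⟩)) w,
                    (DFunLike.congr_fun hα₀ w).symm⟩
              have hXa : rhoFun G H X ⟨β.range, α₀⟩ = (Nat.card ↥(Sx β) : ℚ) /
                  (Nat.card ↥(Subgroup.centralizer ((γ.range : Subgroup G) : Set G)) : ℚ) := by
                calc rhoFun G H X ⟨β.range, α₀⟩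
                    = (Nat.card ↥{x : X | ∀ v : ↥β.range,
                        ((α₀ v, (v : H)) : G × H) • x = x} : ℚ) /
                      (Nat.card ↥(Subgroup.centralizer
                        ((α₀.range : Subgroup G) : Set G)) : ℚ) := rfl
                  _ = _ := by rw [hset', hrange']
              have hYb : rhoFun H K Y ⟨W, β⟩ = (Nat.card ↥(Sy β) : ℚ) /
                  (Nat.card ↥(Subgroup.centralizer ((β.range : Subgroup H) : Set H)) : ℚ) := rfl
              rw [hXa, hYb]
              have hcH : (Nat.card ↥(Subgroup.centralizer ((β.range : Subgroup H) : Set H)) : ℚ)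
                  ≠ 0 := by exact_mod_cast Nat.card_pos.ne'
              have hcC : (Nat.card ↥(Subgroup.centralizer ((γ.range : Subgroup G) : Set G)) : ℚ)
                  ≠ 0 := by exact_mod_cast Nat.card_pos.ne'
              have hHq : (Nat.card H : ℚ) ≠ 0 := by exact_mod_cast Nat.card_pos.ne'
              have habs : ∀ cH hq cx cc cy : ℚ, cH ≠ 0 → cc ≠ 0 → hq ≠ 0 →
                  cH / hq * (cx / cc) * (cy / cH) = cx * cy / (hq * cc) := by
                intro cH hq cx cc cy h1 h2 h3
                field_simp
              exact habs _ _ _ _ _ hcH hcC hHq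
          · -- no compatible α₀ : both sides vanish
            have hcx : Nat.card ↥(Sx β) = 0 := by
              rcases Set.eq_empty_or_nonempty (Sx β) with he | hne
              · rw [he]
                haveI : IsEmpty ↥(∅ : Set X) := Set.isEmpty_coe_sort.mpr rfl
                exact Nat.card_of_isEmpty
              · exfalso
                obtain ⟨x, hx⟩ := hne
                apply hex
                have hker : (β.codRestrict β.range
                    (fun w => MonoidHom.mem_range.mpr ⟨w, rfl⟩)).ker ≤ γ.ker := by
                  intro w hw
                  have h11 : β w = 1 := by
                    have h12 := congrArg Subtype.val (MonoidHom.mem_ker.mp hw)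
                    exact h12
                  have h12 := hx w
                  rw [h11] at h12
                  exact MonoidHom.mem_ker.mpr (hX x (γ w) h12)
                refine ⟨((β.codRestrict β.range (fun w => MonoidHom.mem_range.mpr ⟨w, rfl⟩)
                    ).liftOfRightInverse (Function.surjInv (hsurjAll β))
                    (Function.rightInverse_surjInv (hsurjAll β))) ⟨γ, hker⟩, ?_⟩
                exact (MonoidHom.liftOfRightInverse_comp _ _ _ ⟨γ, hker⟩).symm
            rw [Finset.sum_eq_zero fun α _ => if_neg fun hc => hex ⟨α, hc⟩, hcx]
            rw [Nat.cast_zero, zero_mul, zero_div]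
    -- final assembly
    rw [hLHS, hRHS, ← Finset.sum_div]
    have hHq : (Nat.card H : ℚ) ≠ 0 := by exact_mod_cast Nat.card_pos.ne'
    have hcC : (Nat.card ↥(Subgroup.centralizer ((γ.range : Subgroup G) : Set G)) : ℚ) ≠ 0 := by
      exact_mod_cast Nat.card_pos.ne'
    have hnum : (Nat.card ↥FixQ : ℚ) * (Nat.card H : ℚ)
        = ∑ β : ↥W →* H, (Nat.card ↥(Sx β) : ℚ) * (Nat.card ↥(Sy β) : ℚ) := by
      exact_mod_cast (hA.symm.trans (hFcard.trans hF'card))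
    rw [div_eq_div_iff hcC (mul_ne_zero hHq hcC)]
    calc (Nat.card ↥FixQ : ℚ) * ((Nat.card H : ℚ) *
          (Nat.card ↥(Subgroup.centralizer ((γ.range : Subgroup G) : Set G)) : ℚ))
        = ((Nat.card ↥FixQ : ℚ) * (Nat.card H : ℚ)) *
          (Nat.card ↥(Subgroup.centralizer ((γ.range : Subgroup G) : Set G)) : ℚ) := by ring
      _ = _ := by rw [hnum]
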